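/- Let n ≥ 3 and let Λ = {λ₁, λ₂, …, λₙ} be a realizable multiset of complex numbers (there exists an n×n entrywise nonnegative real matrix whose characteristic polynomial over ℂ equals ∏ᵢ₌₁ⁿ (X − λᵢ)) with λ₁ real, the multiset {λ₂, …, λₙ} closed under complex conjugation, and for each i = 2, …, n: λᵢ is nonreal with Re λᵢ ≤ 0 and |Re λᵢ| < |Im λᵢ| ≤ √3·|Re λᵢ|. Let γ₁, …, γₙ be nonnegative real numbers with γ₁ + ⋯ + γₙ = λ₁ + ⋯ + λₙ. Then there exists an n×n entrywise nonnegative real matrix B whose characteristic polynomial over ℂ equals ∏ᵢ₌₁ⁿ (X − λᵢ) and whose multiset of diagonal entries is {γ₁, …, γₙ}. -/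

import Mathlib

open Polynomial

namespace Smigoc

noncomputable def pchain (f : Polynomial ℝ) : List ℝ → Polynomial ℝ
  | [] => f
  | t :: L => (pchain f L) /ₘ (X - C t)

noncomputable def ev (f : Polynomial ℝ) : List ℝ → ℝ
  | [] => 0
  | t :: L => (pchain f L).eval t

@[simp] lemma pchain_nil (f : Polynomial ℝ) : pchain f [] = f := rfl
@[simp] lemma pchain_cons (f : Polynomial ℝ) (t : ℝ) (L : List ℝ) :
    pchain f (t :: L) = (pchain f L) /ₘ (X - C t) := rfl
@[simp] lemma ev_nil (f : Polynomial ℝ) : ev f [] = 0 := rfl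
@[simp] lemma ev_cons (f : Polynomial ℝ) (t : ℝ) (L : List ℝ) :
    ev f (t :: L) = (pchain f L).eval t := rfl

lemma div_helper {p q : Polynomial ℝ} {t : ℝ} (r : ℝ) (h : p = (X - C t) * q + C r) :
    p /ₘ (X - C t) = q :=
  (div_modByMonic_unique q (C r) (monic_X_sub_C t)
    ⟨by rw [h]; ring, by rw [degree_X_sub_C]; exact degree_C_lt⟩).1

lemma self_eq_div (p : Polynomial ℝ) (t : ℝ) :
    p = (X - C t) * (p /ₘ (X - C t)) + C (p.eval t) := by
  conv_lhs => rw [← modByMonic_add_div p (X - C t)]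
  rw [modByMonic_X_sub_C_eq_C_eval]; ring

noncomputable def Qp (α s : ℝ) : Polynomial ℝ := X ^ 2 + C (2 * α) * X + C s

lemma PA (h : Polynomial ℝ) (α s : ℝ) : ∀ (M : List ℝ) (t : ℝ),
    pchain (Qp α s * h) (t :: M)
      = Qp α s * pchain h (t :: M) + C (ev h (t :: M)) * (X + C (t + 2 * α))
        + C (ev h M) := by
  intro M
  induction M with
  | nil =>
      intro t
      have hw := self_eq_div h t
      simp only [pchain_cons, pchain_nil, ev_cons, ev_nil, map_zero, add_zero]
      apply div_helper ((t ^ 2 + 2 * α * t + s) * h.eval t)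
      conv_lhs => rw [hw]
      simp only [Qp, map_add, map_mul, map_pow, map_ofNat]
      ring
  | cons t₂ M₂ ih =>
      intro t
      have key := ih t₂
      simp only [pchain_cons] at key ⊢
      rw [show pchain h M₂ /ₘ (X - C t₂) = pchain h (t₂ :: M₂) from rfl] at key
      rw [key]
      have hw := self_eq_div (pchain h (t₂ :: M₂)) t
      apply div_helper ((t ^ 2 + 2 * α * t + s) * (pchain h (t₂ :: M₂)).eval t
        + (ev h (t₂ :: M₂)) * (t₂ + 2 * α + t) + ev h M₂)
      calc Qp α s * pchain h (t₂ :: M₂) + C (ev h (t₂ :: M₂)) * (X + C (t₂ + 2 * α)) + C (ev h M₂)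
          = Qp α s * ((X - C t) * (pchain h (t₂ :: M₂) /ₘ (X - C t)) + C ((pchain h (t₂ :: M₂)).eval t))
            + C (ev h (t₂ :: M₂)) * (X + C (t₂ + 2 * α)) + C (ev h M₂) := by rw [← hw]
        _ = (X - C t) * (Qp α s * (pchain h (t₂ :: M₂) /ₘ (X - C t))
              + C ((pchain h (t₂ :: M₂)).eval t) * (X + C (t + 2 * α)) + C (ev h (t₂ :: M₂)))
            + C ((t ^ 2 + 2 * α * t + s) * (pchain h (t₂ :: M₂)).eval t
              + (ev h (t₂ :: M₂)) * (t₂ + 2 * α + t) + ev h M₂) := by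
            simp only [Qp, map_add, map_mul, map_pow, map_ofNat]; ring
        _ = _ := by rfl

lemma PL (h : Polynomial ℝ) (lam : ℝ) : ∀ (M : List ℝ) (t : ℝ),
    pchain ((X - C lam) * h) (t :: M)
      = (X - C lam) * pchain h (t :: M) + C (ev h (t :: M)) := by
  intro M
  induction M with
  | nil =>
      intro t
      have hw := self_eq_div h t
      simp only [pchain_cons, pchain_nil, ev_cons, ev_nil]
      apply div_helper ((t - lam) * h.eval t)
      conv_lhs => rw [hw]
      simp only [map_sub, map_mul]
      ring
  | cons t₂ M₂ ih =>
      intro t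
      have key := ih t₂
      simp only [pchain_cons] at key ⊢
      rw [show pchain h M₂ /ₘ (X - C t₂) = pchain h (t₂ :: M₂) from rfl] at key
      rw [key]
      have hw := self_eq_div (pchain h (t₂ :: M₂)) t
      apply div_helper ((t - lam) * (pchain h (t₂ :: M₂)).eval t + ev h (t₂ :: M₂))
      calc (X - C lam) * pchain h (t₂ :: M₂) + C (ev h (t₂ :: M₂))
          = (X - C lam) * ((X - C t) * (pchain h (t₂ :: M₂) /ₘ (X - C t))
              + C ((pchain h (t₂ :: M₂)).eval t)) + C (ev h (t₂ :: M₂)) := by rw [← hw]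
        _ = (X - C t) * ((X - C lam) * (pchain h (t₂ :: M₂) /ₘ (X - C t))
              + C ((pchain h (t₂ :: M₂)).eval t))
            + C ((t - lam) * (pchain h (t₂ :: M₂)).eval t + ev h (t₂ :: M₂)) := by
            simp only [map_add, map_mul, map_sub]; ring
        _ = _ := by rfl

noncomputable def gP (P : Multiset (ℝ × ℝ)) : Polynomial ℝ :=
  (P.map fun p => Qp p.1 p.2).prod

noncomputable def twoA (P : Multiset (ℝ × ℝ)) : ℝ := (P.map fun p => 2 * p.1).sum

@[simp] lemma gP_zero : gP 0 = 1 := by simp [gP]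
@[simp] lemma gP_cons (q : ℝ × ℝ) (P : Multiset (ℝ × ℝ)) :
    gP (q ::ₘ P) = Qp q.1 q.2 * gP P := by simp [gP]
@[simp] lemma twoA_zero : twoA 0 = 0 := by simp [twoA]
@[simp] lemma twoA_cons (q : ℝ × ℝ) (P : Multiset (ℝ × ℝ)) :
    twoA (q ::ₘ P) = 2 * q.1 + twoA P := by simp [twoA]

lemma one_div_lin (t : ℝ) : (1 : Polynomial ℝ) /ₘ (X - C t) = 0 :=
  div_helper 1 (by simp)

lemma XC_div_lin (c t : ℝ) : (X + C c) /ₘ (X - C t) = 1 :=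
  div_helper (c + t) (by simp only [map_add]; ring)

lemma pchain_one_cons (t : ℝ) (L : List ℝ) : pchain 1 (t :: L) = 0 := by
  induction L generalizing t with
  | nil => simpa using one_div_lin t
  | cons t' L ih => simp only [pchain_cons] at ih ⊢; rw [ih t', zero_divByMonic]

def T2prop (P : Multiset (ℝ × ℝ)) : Prop :=
  ∀ L : List ℝ, L.length + 1 = 2 * Multiset.card P →
    pchain (gP P) L = X + C (twoA P + L.sum)

lemma T1_of {P : Multiset (ℝ × ℝ)} (h2 : T2prop P) :
    ∀ L : List ℝ, L.length = 2 * Multiset.card P → pchain (gP P) L = 1 := by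
  intro L hL
  cases L with
  | nil =>
      have hL0 : 0 = 2 * Multiset.card P := hL
      have : Multiset.card P = 0 := by omega
      rw [Multiset.card_eq_zero] at this
      subst this; simp
  | cons t L' =>
      rw [pchain_cons, h2 L' (by simpa using hL), XC_div_lin]

lemma T3_of {P : Multiset (ℝ × ℝ)}
    (h1 : ∀ L : List ℝ, L.length = 2 * Multiset.card P → pchain (gP P) L = 1) :
    ∀ L : List ℝ, L.length = 2 * Multiset.card P + 1 → pchain (gP P) L = 0 := by
  intro L hL
  cases L with
  | nil => simp at hL
  | cons t L' => rw [pchain_cons, h1 L' (by simpa using hL), one_div_lin]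

lemma T2 (P : Multiset (ℝ × ℝ)) : T2prop P := by
  induction P using Multiset.strongInductionOn with
  | ih P IH =>
    intro L hL
    have hPne : P ≠ 0 := by
      rintro rfl; simp at hL
    obtain ⟨q, hq⟩ := Multiset.exists_mem_of_ne_zero hPne
    obtain ⟨P', rfl⟩ := Multiset.exists_cons_of_mem hq
    have h2' : T2prop P' := IH P' (Multiset.lt_cons_self P' q)
    have h1' := T1_of h2'
    have h3' := T3_of h1'
    rw [Multiset.card_cons] at hL
    rcases Nat.eq_zero_or_pos (Multiset.card P') with hc0 | hcpos
    · -- base : single pair, L = [t]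
      rw [Multiset.card_eq_zero] at hc0
      subst hc0
      simp only [Multiset.card_zero, Nat.mul_add] at hL
      obtain ⟨t, rfl⟩ : ∃ t, L = [t] := by
        match L, hL with
        | [t], _ => exact ⟨t, rfl⟩
      rw [gP_cons, gP_zero, PA]
      simp [pchain_one_cons, one_div_lin, twoA, Qp]
      ring
    · -- L has length 2 card P' + 1 ≥ 3
      obtain ⟨t', t, L'', rfl⟩ : ∃ t' t L'', L = t' :: t :: L'' := by
        match L with
        | [] => simp only [List.length_nil] at hL; omega
        | [t] => simp only [List.length_cons, List.length_nil] at hL; omega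
        | t' :: t :: L'' => exact ⟨t', t, L'', rfl⟩
      · have hlen : L''.length + 1 = 2 * Multiset.card P' := by
          simp only [List.length_cons] at hL ⊢; omega
        rw [gP_cons, PA]
        have e1 : pchain (gP P') (t' :: t :: L'') = 0 :=
          h3' _ (by simp only [List.length_cons]; omega)
        have e2 : pchain (gP P') (t :: L'') = 1 :=
          h1' _ (by simp only [List.length_cons]; omega)
        have e3 : pchain (gP P') L'' = X + C (twoA P' + L''.sum) := h2' _ hlen
        rw [show ev (gP P') (t' :: t :: L'') = 1 by simp [ev_cons, e2],
            show ev (gP P') (t :: L'') = t + (twoA P' + L''.sum) by simp [ev_cons, e3],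
            e1]
        simp only [mul_zero, zero_add, one_mul, map_one, twoA_cons, List.sum_cons, map_add]
        ring
lemma T1 (P : Multiset (ℝ × ℝ)) :
    ∀ L : List ℝ, L.length = 2 * Multiset.card P → pchain (gP P) L = 1 :=
  T1_of (T2 P)

lemma T3 (P : Multiset (ℝ × ℝ)) :
    ∀ L : List ℝ, L.length = 2 * Multiset.card P + 1 → pchain (gP P) L = 0 :=
  T3_of (T1 P)

def Good (P : Multiset (ℝ × ℝ)) : Prop :=
  ∀ p ∈ P, 0 ≤ p.1 ∧ 0 ≤ p.2 ∧ p.2 ≤ 4 * p.1 ^ 2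

lemma twoA_nonneg {P : Multiset (ℝ × ℝ)} (hP : Good P) : 0 ≤ twoA P := by
  refine Multiset.sum_nonneg ?_
  intro x hx
  obtain ⟨p, hp, rfl⟩ := Multiset.mem_map.1 hx
  have := (hP p hp).1; linarith

lemma eval_Qp (α s t : ℝ) : (Qp α s).eval t = t ^ 2 + 2 * α * t + s := by
  simp [Qp]

lemma C1 {P : Multiset (ℝ × ℝ)} (hP : Good P) :
    ∀ L : List ℝ, (∀ x ∈ L, 0 ≤ x) → ∀ t : ℝ, 0 ≤ t →
      0 ≤ (pchain (gP P) L).eval t := by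
  induction P using Multiset.induction with
  | empty =>
      intro L hL t ht
      cases L with
      | nil => simp
      | cons a L => rw [gP_zero, pchain_one_cons]; simp
  | cons q P IH =>
      have hq := hP q (Multiset.mem_cons_self q P)
      have hP' : Good P := fun p hp => hP p (Multiset.mem_cons_of_mem hp)
      intro L hL t ht
      cases L with
      | nil =>
          rw [gP_cons, pchain_nil, eval_mul, eval_Qp]
          have h1 : 0 ≤ t ^ 2 + 2 * q.1 * t + q.2 := by nlinarith [hq.1, hq.2.1]
          exact mul_nonneg h1 (IH hP' [] (by simp) t ht)
      | cons t' M =>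
          have ht' : 0 ≤ t' := hL t' (by simp)
          have hM : ∀ x ∈ M, 0 ≤ x := fun x hx => hL x (by simp [hx])
          rw [gP_cons, PA]
          simp only [eval_add, eval_mul, eval_C, eval_X, ev_cons]
          have e1 : 0 ≤ (pchain (gP P) (t' :: M)).eval t := IH hP' (t' :: M) hL t ht
          have e2 : 0 ≤ (pchain (gP P) M).eval t' := IH hP' M hM t' ht'
          have e3 : 0 ≤ ev (gP P) M := by
            cases M with
            | nil => simp
            | cons a M' =>
                exact IH hP' M' (fun x hx => hM x (by simp [hx])) a (hM a (by simp))
          have h1 : 0 ≤ (Qp q.1 q.2).eval t := by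
            rw [eval_Qp]; nlinarith [hq.1, hq.2.1]
          nlinarith [mul_nonneg h1 e1, hq.1]

lemma C2 {P : Multiset (ℝ × ℝ)} (hP : Good P) :
    ∀ t₁ t₂ : ℝ, 0 ≤ t₁ → 0 ≤ t₂ → ∀ L : List ℝ, (∀ x ∈ L, 0 ≤ x) →
      L.length + 1 ≤ 2 * Multiset.card P →
      (pchain (gP P) L).eval t₂
        ≤ (twoA P + t₂ + L.sum) * (pchain (gP P) (t₂ :: L)).eval t₁ := by
  induction P using Multiset.strongInductionOn with
  | ih P IHP =>
    intro t₁ t₂ ht₁ ht₂ L hL hlen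
    rcases eq_or_lt_of_le hlen with heq | hlt
    · rw [T2 P L heq, T1 P (t₂ :: L) (by simpa using heq)]
      simp only [eval_add, eval_C, eval_X, eval_one, mul_one]
      linarith
    · have hcard : 1 ≤ Multiset.card P := by omega
      have hPne : P ≠ 0 := by
        rintro rfl; simp at hcard
      obtain ⟨q, hqmem⟩ := Multiset.exists_mem_of_ne_zero hPne
      obtain ⟨P', rfl⟩ := Multiset.exists_cons_of_mem hqmem
      have hq := hP q (Multiset.mem_cons_self q P')
      have hP' : Good P' := fun p hp => hP p (Multiset.mem_cons_of_mem hp)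
      have hα : 0 ≤ q.1 := hq.1
      have hs : 0 ≤ q.2 := hq.2.1
      have hs4 : q.2 ≤ 4 * q.1 ^ 2 := hq.2.2
      have hA' : 0 ≤ twoA P' := twoA_nonneg hP'
      rw [Multiset.card_cons] at hlt
      cases L with
      | nil =>
          have hG : 0 ≤ (gP P').eval t₂ := C1 hP' [] (by simp) t₂ ht₂
          have hE' : 0 ≤ (pchain (gP P') [t₂]).eval t₁ :=
            C1 hP' [t₂] (by intro x hx; simp at hx; exact hx ▸ ht₂) t₁ ht₁
          rw [gP_cons, pchain_nil, eval_mul, eval_Qp]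
          rw [show pchain (Qp q.1 q.2 * gP P') [t₂] = _ from PA (gP P') q.1 q.2 [] t₂]
          simp only [eval_add, eval_mul, eval_C, eval_X, ev_cons, ev_nil, pchain_nil,
            List.sum_nil, twoA_cons, map_zero, add_zero]
          have hQ1 : 0 ≤ (Qp q.1 q.2).eval t₁ := by rw [eval_Qp]; nlinarith
          have key : t₂ ^ 2 + 2 * q.1 * t₂ + q.2 ≤ (t₂ + 2 * q.1) ^ 2 := by nlinarith
          have step1 : (t₂ ^ 2 + 2 * q.1 * t₂ + q.2) * (gP P').eval t₂
              ≤ (t₂ + 2 * q.1) ^ 2 * (gP P').eval t₂ :=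
            mul_le_mul_of_nonneg_right key hG
          have step2 : (t₂ + 2 * q.1) ^ 2
              ≤ (2 * q.1 + twoA P' + t₂) * (t₁ + (t₂ + 2 * q.1)) := by nlinarith
          have step3 : (t₂ + 2 * q.1) ^ 2 * (gP P').eval t₂
              ≤ ((2 * q.1 + twoA P' + t₂) * (t₁ + (t₂ + 2 * q.1))) * (gP P').eval t₂ :=
            mul_le_mul_of_nonneg_right step2 hG
          have step4 : 0 ≤ (2 * q.1 + twoA P' + t₂) *
              ((Qp q.1 q.2).eval t₁ * (pchain (gP P') [t₂]).eval t₁) :=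
            mul_nonneg (by linarith) (mul_nonneg hQ1 hE')
          have expand : (2 * q.1 + twoA P' + t₂) *
                ((Qp q.1 q.2).eval t₁ * (pchain (gP P') [t₂]).eval t₁
                  + (gP P').eval t₂ * (t₁ + (t₂ + 2 * q.1)))
              = (2 * q.1 + twoA P' + t₂) *
                  ((Qp q.1 q.2).eval t₁ * (pchain (gP P') [t₂]).eval t₁)
                + ((2 * q.1 + twoA P' + t₂) * (t₁ + (t₂ + 2 * q.1))) * (gP P').eval t₂ := by
            ring
          linarith [step1, step3, step4, expand.ge, expand.le]
      | cons t₃ L' =>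
          have ht₃ : 0 ≤ t₃ := hL t₃ (by simp)
          have hL' : ∀ x ∈ L', 0 ≤ x := fun x hx => hL x (by simp [hx])
          have hsum' : 0 ≤ L'.sum := List.sum_nonneg hL'
          have hE₁ : 0 ≤ (pchain (gP P') (t₃ :: L')).eval t₂ := C1 hP' (t₃ :: L') hL t₂ ht₂
          have hE₂ : 0 ≤ (pchain (gP P') L').eval t₃ := C1 hP' L' hL' t₃ ht₃
          have hF : 0 ≤ (pchain (gP P') (t₂ :: t₃ :: L')).eval t₁ := by
            refine C1 hP' (t₂ :: t₃ :: L') ?_ t₁ ht₁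
            intro x hx
            rcases List.mem_cons.1 hx with h | h
            · exact h ▸ ht₂
            · exact hL x h
          have hE₃ : ev (gP P') L' ≤ (twoA P' + L'.sum) * (pchain (gP P') L').eval t₃ := by
            cases L' with
            | nil => simpa using mul_nonneg hA' hE₂
            | cons t₄ L'' =>
                have h4 : 0 ≤ t₄ := hL' t₄ (by simp)
                have := IHP P' (Multiset.lt_cons_self P' q) hP' t₃ t₄ ht₃ h4
                  L'' (fun x hx => hL' x (by simp [hx]))
                  (by simp only [List.length_cons] at hlt ⊢; omega)
                rw [show ev (gP P') (t₄ :: L'') = (pchain (gP P') L'').eval t₄ from rfl]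
                calc (pchain (gP P') L'').eval t₄
                    ≤ (twoA P' + t₄ + L''.sum) * (pchain (gP P') (t₄ :: L'')).eval t₃ := this
                  _ = (twoA P' + (t₄ :: L'').sum) * (pchain (gP P') (t₄ :: L'')).eval t₃ := by
                      rw [List.sum_cons]; ring
          rw [gP_cons]
          rw [show pchain (Qp q.1 q.2 * gP P') (t₃ :: L') = _ from PA (gP P') q.1 q.2 L' t₃]
          rw [show pchain (Qp q.1 q.2 * gP P') (t₂ :: t₃ :: L') = _ from
            PA (gP P') q.1 q.2 (t₃ :: L') t₂]
          simp only [eval_add, eval_mul, eval_C, eval_X, ev_cons, twoA_cons, List.sum_cons]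
          rw [eval_Qp, eval_Qp]
          have hK0 : (0:ℝ) ≤ 2 * q.1 + twoA P' + t₂ + (t₃ + L'.sum) := by linarith
          have key : t₂ ^ 2 + 2 * q.1 * t₂ + q.2
              ≤ (2 * q.1 + twoA P' + t₂ + (t₃ + L'.sum)) * (t₁ + (t₂ + 2 * q.1)) := by nlinarith
          have stepA : (t₂ ^ 2 + 2 * q.1 * t₂ + q.2) * (pchain (gP P') (t₃ :: L')).eval t₂
              ≤ ((2 * q.1 + twoA P' + t₂ + (t₃ + L'.sum)) * (t₁ + (t₂ + 2 * q.1)))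
                  * (pchain (gP P') (t₃ :: L')).eval t₂ :=
            mul_le_mul_of_nonneg_right key hE₁
          have stepB : (pchain (gP P') L').eval t₃ * (t₂ + (t₃ + 2 * q.1)) + ev (gP P') L'
              ≤ (2 * q.1 + twoA P' + t₂ + (t₃ + L'.sum)) * (pchain (gP P') L').eval t₃ := by
            nlinarith [hE₃]
          have stepC : 0 ≤ (2 * q.1 + twoA P' + t₂ + (t₃ + L'.sum)) *
              ((t₁ ^ 2 + 2 * q.1 * t₁ + q.2) * (pchain (gP P') (t₂ :: t₃ :: L')).eval t₁) :=
            mul_nonneg hK0 (mul_nonneg (by nlinarith) hF)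
          set E1 := (pchain (gP P') (t₃ :: L')).eval t₂
          set E2 := (pchain (gP P') L').eval t₃
          set E3 := ev (gP P') L'
          set F := (pchain (gP P') (t₂ :: t₃ :: L')).eval t₁
          have expand : (2 * q.1 + twoA P' + t₂ + (t₃ + L'.sum)) *
                ((t₁ ^ 2 + 2 * q.1 * t₁ + q.2) * F + E1 * (t₁ + (t₂ + 2 * q.1)) + E2)
              = (2 * q.1 + twoA P' + t₂ + (t₃ + L'.sum)) * ((t₁ ^ 2 + 2 * q.1 * t₁ + q.2) * F)
                + ((2 * q.1 + twoA P' + t₂ + (t₃ + L'.sum)) * (t₁ + (t₂ + 2 * q.1))) * E1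
                + (2 * q.1 + twoA P' + t₂ + (t₃ + L'.sum)) * E2 := by ring
          linarith [stepA, stepB, stepC]
lemma BETA {P : Multiset (ℝ × ℝ)} (hP : Good P) (lam1 : ℝ) :
    ∀ L : List ℝ, (∀ x ∈ L, 0 ≤ x) → ∀ t : ℝ, 0 ≤ t →
      t + L.sum + twoA P ≤ lam1 → L.length ≤ 2 * Multiset.card P →
      (pchain ((X - C lam1) * gP P) L).eval t ≤ 0 := by
  intro L hL t ht hsum hlen
  have hA := twoA_nonneg hP
  cases L with
  | nil =>
      simp only [pchain_nil, eval_mul, eval_sub, eval_X, eval_C, List.sum_nil] at hsum ⊢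
      have hg : 0 ≤ (gP P).eval t := by
        have := C1 hP [] (by simp) t ht
        simpa using this
      have : t - lam1 ≤ 0 := by linarith
      exact mul_nonpos_of_nonpos_of_nonneg this hg
  | cons t₃ L' =>
      have ht₃ : 0 ≤ t₃ := hL t₃ (by simp)
      have hL' : ∀ x ∈ L', 0 ≤ x := fun x hx => hL x (by simp [hx])
      rw [PL]
      simp only [eval_add, eval_mul, eval_sub, eval_X, eval_C, ev_cons]
      have hG : 0 ≤ (pchain (gP P) (t₃ :: L')).eval t := C1 hP (t₃ :: L') hL t ht
      have hC2 := C2 hP t t₃ ht ht₃ L' hL'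
        (by simpa using hlen)
      have hkey : (pchain (gP P) L').eval t₃
          ≤ (twoA P + t₃ + L'.sum) * (pchain (gP P) (t₃ :: L')).eval t := hC2
      have hfac : t - lam1 + (twoA P + t₃ + L'.sum) ≤ 0 := by
        simp only [List.sum_cons] at hsum; linarith
      nlinarith [mul_le_mul_of_nonneg_right (le_refl (t - lam1)) hG]

/-! ### The Hessenberg matrix -/

noncomputable def hess (k : ℕ) (d b : Fin k → Polynomial ℝ) : Matrix (Fin k) (Fin k) (Polynomial ℝ) :=
  Matrix.of fun i j =>
    if (i : ℕ) = (j : ℕ) then d i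
    else if (j : ℕ) = (i : ℕ) + 1 then -1
    else if (j : ℕ) = 0 ∧ (i : ℕ) ≠ 0 then b i else 0

lemma hess_det_one (d b : Fin 1 → Polynomial ℝ) : (hess 1 d b).det = d 0 := by
  rw [Matrix.det_fin_one]
  simp [hess]

lemma hess_det_succ (k : ℕ) (hk : 1 ≤ k) (d b : Fin (k + 1) → Polynomial ℝ) :
    (hess (k + 1) d b).det
      = d (Fin.last k) * (hess k (d ∘ Fin.castSucc) (b ∘ Fin.castSucc)).det
        + b (Fin.last k) := by
  rw [Matrix.det_succ_row _ (Fin.last k)]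
  have hzero : ∀ j ∈ (Finset.univ : Finset (Fin (k + 1))), j ∉ ({0, Fin.last k} : Finset (Fin (k+1))) →
      (-1 : Polynomial ℝ) ^ ((Fin.last k : ℕ) + (j : ℕ)) * hess (k+1) d b (Fin.last k) j *
        ((hess (k+1) d b).submatrix (Fin.last k).succAbove j.succAbove).det = 0 := by
    intro j _ hj
    simp only [Finset.mem_insert, Finset.mem_singleton] at hj
    push_neg at hj
    have h1 : (j : ℕ) ≠ 0 := fun h => hj.1 (Fin.ext h)
    have h2 : (j : ℕ) ≠ k := fun h => hj.2 (Fin.ext h)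
    have : hess (k+1) d b (Fin.last k) j = 0 := by
      simp only [hess, Matrix.of_apply, Fin.val_last]
      rw [if_neg (fun h => h2 h.symm), if_neg (by omega), if_neg (by tauto)]
    rw [this]; ring
  rw [← Finset.sum_subset (Finset.subset_univ ({0, Fin.last k} : Finset (Fin (k+1)))) hzero]
  have hne : (0 : Fin (k+1)) ≠ Fin.last k := by
    intro h
    have := congrArg Fin.val h
    simp [Fin.val_last] at this
    omega
  rw [Finset.sum_pair hne]
  -- the j = last term
  have hlastentry : hess (k+1) d b (Fin.last k) (Fin.last k) = d (Fin.last k) := by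
    simp [hess]
  have hsubmain : (hess (k+1) d b).submatrix (Fin.last k).succAbove (Fin.last k).succAbove
      = hess k (d ∘ Fin.castSucc) (b ∘ Fin.castSucc) := by
    ext i j
    simp [hess, Matrix.submatrix_apply, Fin.succAbove_last, Fin.coe_castSucc]
    simp only [Fin.ext_iff, Fin.coe_castSucc, Fin.val_zero]
  -- the j = 0 term : lower triangular minor
  have h0entry : hess (k+1) d b (Fin.last k) 0 = b (Fin.last k) := by
    have hc : ((Fin.last k : Fin (k+1)) : ℕ) = k := Fin.val_last k
    have he : (((0 : Fin (k+1))) : ℕ) = 0 := rfl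
    simp only [hess, Matrix.of_apply]
    rw [if_neg (by rw [hc, he]; omega), if_neg (by rw [he, hc]; omega),
      if_pos (by rw [he, hc]; exact ⟨rfl, by omega⟩)]
  have htri : ((hess (k+1) d b).submatrix (Fin.last k).succAbove (0 : Fin (k+1)).succAbove).det
      = (-1) ^ k := by
    have hdet := Matrix.det_of_lowerTriangular
      ((hess (k+1) d b).submatrix (Fin.last k).succAbove (0 : Fin (k+1)).succAbove)
      (by
        intro i j hij
        simp only [Matrix.submatrix_apply, Fin.succAbove_last, Fin.succAbove_zero]
        have hij' : (i : ℕ) < (j : ℕ) := hij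
        simp only [hess, Matrix.of_apply, Fin.coe_castSucc, Fin.val_succ]
        rw [if_neg (by omega), if_neg (by omega), if_neg (by omega)])
    rw [hdet]
    have : ∀ i : Fin k, ((hess (k+1) d b).submatrix (Fin.last k).succAbove
        (0 : Fin (k+1)).succAbove) i i = -1 := by
      intro i
      simp only [Matrix.submatrix_apply, Fin.succAbove_last, Fin.succAbove_zero]
      simp only [hess, Matrix.of_apply, Fin.coe_castSucc, Fin.val_succ]
      rw [if_neg (by omega)]
      simp
    rw [Finset.prod_congr rfl (fun i _ => this i)]
    simp
  rw [hlastentry, h0entry, hsubmain, htri]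
  have hsign : ((-1 : Polynomial ℝ)) ^ ((Fin.last k : ℕ) + (0 : Fin (k+1)) : ℕ) * b (Fin.last k) * (-1) ^ k
      = b (Fin.last k) := by
    simp only [Fin.val_last, Fin.val_zero, add_zero]
    rw [mul_comm, ← mul_assoc, ← pow_add]
    rw [Even.neg_one_pow ⟨k, rfl⟩, one_mul]
  rw [hsign]
  rw [show ((-1 : Polynomial ℝ)) ^ ((Fin.last k : ℕ) + ((Fin.last k : Fin (k+1))) : ℕ) = 1 by
    simp only [Fin.val_last]
    exact Even.neg_one_pow ⟨k, rfl⟩]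
  ring
lemma hess_det_eq_pchain (n : ℕ) (hn : 2 ≤ n) (γv : Fin n → ℝ) (f : Polynomial ℝ)
    (hbase : pchain f ((List.ofFn γv).drop 1) = X - C (γv ⟨0, by omega⟩)) :
    (hess n (fun i => X - C (γv i))
      (fun i => C ((pchain f ((List.ofFn γv).drop ((i : ℕ) + 1))).eval (γv i)))).det = f := by
  have main : ∀ k, 1 ≤ k → ∀ hkn : k ≤ n,
      (hess k (fun i : Fin k => X - C (γv (Fin.castLE hkn i)))
        (fun i : Fin k => C ((pchain f ((List.ofFn γv).drop (((Fin.castLE hkn i) : ℕ) + 1))).eval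
          (γv (Fin.castLE hkn i))))).det = pchain f ((List.ofFn γv).drop k) := by
    intro k hk1
    induction k, hk1 using Nat.le_induction with
    | base =>
        intro hkn
        rw [hess_det_one, hbase]
        exact congrArg (fun z => X - C (γv z)) (Fin.ext rfl)
    | succ k hk1 IH =>
        intro hkn
        have hkn' : k ≤ n := by omega
        have hklt : k < n := by omega
        rw [hess_det_succ k hk1]
        rw [show (fun i : Fin (k+1) => X - C (γv (Fin.castLE hkn i))) ∘ Fin.castSucc
            = (fun i : Fin k => X - C (γv (Fin.castLE hkn' i))) from funext fun i => rfl]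
        rw [show (fun i : Fin (k+1) => C ((pchain f ((List.ofFn γv).drop
                (((Fin.castLE hkn i) : ℕ) + 1))).eval (γv (Fin.castLE hkn i)))) ∘ Fin.castSucc
            = (fun i : Fin k => C ((pchain f ((List.ofFn γv).drop
                (((Fin.castLE hkn' i) : ℕ) + 1))).eval (γv (Fin.castLE hkn' i))))
          from funext fun i => rfl]
        rw [IH hkn']
        have hdrop : (List.ofFn γv).drop k = γv ⟨k, hklt⟩ :: (List.ofFn γv).drop (k + 1) := by
          rw [List.drop_eq_getElem_cons (by rw [List.length_ofFn]; omega)]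
          congr 1
          exact List.getElem_ofFn _
        rw [hdrop, pchain_cons]
        have hself := self_eq_div (pchain f ((List.ofFn γv).drop (k + 1))) (γv ⟨k, hklt⟩)
        have hlast : Fin.castLE hkn (Fin.last k) = ⟨k, hklt⟩ := rfl
        rw [hlast]
        exact hself.symm
  have := main n (by omega) le_rfl
  have h0 : (List.ofFn γv).drop n = [] := by
    have := List.drop_length (l := List.ofFn γv)
    rwa [List.length_ofFn] at this
  simp only [h0, pchain_nil] at this
  exact this

lemma charmatrix_B (n : ℕ) (γv bv : Fin n → ℝ) :
    Matrix.charmatrix (Matrix.of fun i j : Fin n =>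
        if (i : ℕ) = (j : ℕ) then γv i
        else if (j : ℕ) = (i : ℕ) + 1 then 1
        else if (j : ℕ) = 0 ∧ (i : ℕ) ≠ 0 then bv i else 0)
      = hess n (fun i => X - C (γv i)) (fun i => - C (bv i)) := by
  ext i j
  by_cases hij : i = j
  · subst hij
    rw [Matrix.charmatrix_apply_eq]
    simp [hess]
  · rw [Matrix.charmatrix_apply_ne _ _ _ hij, Matrix.of_apply]
    have hvij : ¬ ((i : ℕ) = (j : ℕ)) := fun h => hij (Fin.ext h)
    simp only [hess, Matrix.of_apply, if_neg hvij]
    split_ifs <;> simp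
lemma pair_up : ∀ M : Multiset ℂ, M.map (starRingEnd ℂ) = M → (∀ z ∈ M, z.im ≠ 0) →
    ∃ P : Multiset ℂ, (∀ z ∈ P, z ∈ M) ∧
      M = P.bind (fun z => z ::ₘ (starRingEnd ℂ) z ::ₘ 0) := by
  intro M
  induction M using Multiset.strongInductionOn with
  | ih M IH =>
    intro hc him
    rcases Multiset.empty_or_exists_mem M with rfl | ⟨z, hz⟩
    · exact ⟨0, by simp, by simp⟩
    have hzc : (starRingEnd ℂ) z ∈ M := by
      rw [← hc]; exact Multiset.mem_map_of_mem _ hz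
    have hne : (starRingEnd ℂ) z ≠ z := fun h => him z hz (Complex.conj_eq_iff_im.1 h)
    set M'' := (M.erase z).erase ((starRingEnd ℂ) z) with hM''
    have hzc' : (starRingEnd ℂ) z ∈ M.erase z := (Multiset.mem_erase_of_ne hne).2 hzc
    have hMeq : M = z ::ₘ (starRingEnd ℂ) z ::ₘ M'' := by
      rw [hM'', Multiset.cons_erase hzc', Multiset.cons_erase hz]
    have hinj : Function.Injective (starRingEnd ℂ) := (starRingEnd ℂ).injective
    have hcc : ∀ w : ℂ, (starRingEnd ℂ) ((starRingEnd ℂ) w) = w := fun w => by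
      simp
    have hc'' : M''.map (starRingEnd ℂ) = M'' := by
      rw [hM'', Multiset.map_erase _ hinj, Multiset.map_erase _ hinj, hc, hcc z,
        Multiset.erase_comm]
    have hle : M'' ≤ M := le_trans (Multiset.erase_le _ _) (Multiset.erase_le _ _)
    have him'' : ∀ w ∈ M'', w.im ≠ 0 := fun w hw => him w (Multiset.mem_of_le hle hw)
    have hlt : M'' < M := by
      rw [hMeq]
      calc M'' < (starRingEnd ℂ) z ::ₘ M'' := Multiset.lt_cons_self _ _
        _ < z ::ₘ (starRingEnd ℂ) z ::ₘ M'' := Multiset.lt_cons_self _ _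
    obtain ⟨P'', hPmem, hPeq⟩ := IH M'' hlt hc'' him''
    refine ⟨z ::ₘ P'', ?_, ?_⟩
    · intro w hw
      rcases Multiset.mem_cons.1 hw with rfl | hw'
      · exact hz
      · exact Multiset.mem_of_le hle (hPmem w hw')
    · rw [Multiset.cons_bind, ← hPeq, hMeq]
      simp
end Smigoc
open Polynomial Matrix

/-- Šmigoc-but-not-Suleimanova case: let `n ≥ 3`, let `{λ₁, …, λₙ}` be realizable,
with `λ₁` real, `{λ₂, …, λₙ}` closed under conjugation, and each `λᵢ` (`i ≥ 2`)
nonreal with `Re λᵢ ≤ 0` and `|Re λᵢ| < |Im λᵢ| ≤ √3·|Re λᵢ|`. If `γ₁, …, γₙ ≥ 0`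
satisfy `∑ γᵢ = ∑ λᵢ`, then some nonnegative matrix has spectrum `{λ₁, …, λₙ}` and
diagonal entries `{γ₁, …, γₙ}` (as a multiset). -/
theorem smigoc_minus_suleimanova_prescribed_diagonal {n : ℕ} (hn : 3 ≤ n)
    (lam : Fin n → ℂ) (γ : Fin n → ℝ)
    (hreal : (lam ⟨0, by omega⟩).im = 0)
    (hconj : (((Finset.univ : Finset (Fin n)).erase ⟨0, by omega⟩).val.map lam).map
          (starRingEnd ℂ)
        = ((Finset.univ : Finset (Fin n)).erase ⟨0, by omega⟩).val.map lam)
    (hG : ∀ i : Fin n, i ≠ ⟨0, by omega⟩ →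
      (lam i).im ≠ 0 ∧ (lam i).re ≤ 0 ∧ |(lam i).re| < |(lam i).im| ∧
        |(lam i).im| ≤ Real.sqrt 3 * |(lam i).re|)
    (hrealizable : ∃ A : Matrix (Fin n) (Fin n) ℝ, (∀ i j, 0 ≤ A i j) ∧
        A.charpoly.map (algebraMap ℝ ℂ) = ∏ i, (X - C (lam i)))
    (hγ : ∀ i, 0 ≤ γ i)
    (hsum : (∑ i, (γ i : ℂ)) = ∑ i, lam i) :
    ∃ B : Matrix (Fin n) (Fin n) ℝ,
      (∀ i j, 0 ≤ B i j) ∧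
      B.charpoly.map (algebraMap ℝ ℂ) = ∏ i, (X - C (lam i)) ∧
      Finset.univ.val.map (fun i => B i i) = Finset.univ.val.map γ := by
  classical
  clear hrealizable
  set i0 : Fin n := ⟨0, by omega⟩ with hi0def
  set M : Multiset ℂ := ((Finset.univ.erase i0).val.map lam) with hMdef
  have himM : ∀ z ∈ M, z.im ≠ 0 := by
    intro z hzm
    obtain ⟨i, hi, rfl⟩ := Multiset.mem_map.1 hzm
    exact (hG i (Finset.ne_of_mem_erase (Finset.mem_def.2 hi))).1
  obtain ⟨P, hPmem, hPeq⟩ := Smigoc.pair_up M hconj himM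
  have hzprop : ∀ z ∈ P, z.im ≠ 0 ∧ z.re ≤ 0 ∧ Complex.normSq z ≤ 4 * z.re ^ 2 := by
    intro z hzP
    obtain ⟨i, hi, rfl⟩ := Multiset.mem_map.1 (hPmem z hzP)
    obtain ⟨h1, h2, h3, h4⟩ := hG i (Finset.ne_of_mem_erase (Finset.mem_def.2 hi))
    refine ⟨h1, h2, ?_⟩
    have h5 : |(lam i).im| ^ 2 ≤ (Real.sqrt 3 * |(lam i).re|) ^ 2 :=
      pow_le_pow_left₀ (abs_nonneg _) h4 2
    rw [mul_pow, Real.sq_sqrt (by norm_num : (0:ℝ) ≤ 3), sq_abs, sq_abs] at h5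
    rw [Complex.normSq_apply]
    nlinarith
  set Pr : Multiset (ℝ × ℝ) := P.map (fun z => (-z.re, Complex.normSq z)) with hPrdef
  have hGood : Smigoc.Good Pr := by
    intro p hp
    obtain ⟨z, hzP, rfl⟩ := Multiset.mem_map.1 hp
    obtain ⟨h1, h2, h3⟩ := hzprop z hzP
    refine ⟨by dsimp; linarith, Complex.normSq_nonneg z, by dsimp; nlinarith⟩
  set lam1 : ℝ := (lam i0).re with hlam1def
  have hlam0 : lam i0 = (lam1 : ℂ) := Complex.ext (by simp [hlam1def]) (by simpa using hreal)
  have hcardM : Multiset.card M = n - 1 := by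
    rw [hMdef, Multiset.card_map]
    change (Finset.univ.erase i0).card = n - 1
    rw [Finset.card_erase_of_mem (Finset.mem_univ i0), Finset.card_univ, Fintype.card_fin]
  have hcardP : 2 * Multiset.card P = n - 1 := by
    have hcc := congrArg Multiset.card hPeq
    rw [hcardM, Multiset.card_bind] at hcc
    rw [show (Multiset.card ∘ fun z : ℂ => z ::ₘ (starRingEnd ℂ) z ::ₘ 0) = fun _ => 2
      from funext fun z => by simp] at hcc
    rw [Multiset.map_const', Multiset.sum_replicate, smul_eq_mul] at hcc
    omega
  have hcardPr : 2 * Multiset.card Pr = n - 1 := by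
    rw [hPrdef, Multiset.card_map]; exact hcardP
  set s1 : ℝ := ∑ i, γ i with hs1def
  have hs1nn : 0 ≤ s1 := Finset.sum_nonneg fun i _ => hγ i
  have hresum : (M.sum).re = - Smigoc.twoA Pr := by
    have h1 : M.sum = (P.map fun z => z + (starRingEnd ℂ) z).sum := by
      rw [hPeq, Multiset.sum_bind]
      congr 1
      exact Multiset.map_congr rfl fun z _ => by simp
    have h2 : (M.sum).re = (P.map fun z => 2 * z.re).sum := by
      rw [h1, ← Complex.coe_reAddGroupHom,
        AddMonoidHom.map_multiset_sum Complex.reAddGroupHom, Multiset.map_map]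
      congr 1
      refine Multiset.map_congr rfl fun z _ => ?_
      simp [Complex.add_re, Complex.conj_re, Complex.coe_reAddGroupHom]
      ring
    have h3 : Smigoc.twoA Pr = (P.map fun z => 2 * (-z.re)).sum := by
      show (Pr.map fun p => 2 * p.1).sum = _
      rw [hPrdef, Multiset.map_map]
      rfl
    have h4 : (P.map fun z => 2 * z.re).sum + (P.map fun z => 2 * (-z.re)).sum = 0 := by
      rw [← Multiset.sum_map_add]
      rw [Multiset.map_congr rfl (fun z _ => by ring :
        ∀ z ∈ P, 2 * z.re + 2 * (-z.re) = (fun _ : ℂ => (0:ℝ)) z)]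
      simp
    rw [h2, h3]; linarith
  have hsum2 : s1 = lam1 - Smigoc.twoA Pr := by
    have ha : (∑ i, (γ i : ℂ)) = ((s1 : ℝ) : ℂ) := by rw [hs1def]; push_cast; rfl
    have hb : ∑ i, lam i = lam i0 + M.sum := by
      rw [← Finset.add_sum_erase Finset.univ lam (Finset.mem_univ i0)]
      rfl
    have h0 : ((s1 : ℝ) : ℂ) = lam i0 + M.sum := by rw [← ha, hsum, hb]
    have := congrArg Complex.re h0
    rw [Complex.ofReal_re, Complex.add_re, hresum] at this
    rw [this, hlam1def]; ring
  set gl : List ℝ := List.ofFn γ with hgldef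
  have hglen : gl.length = n := by rw [hgldef, List.length_ofFn]
  have hglsum : gl.sum = s1 := by rw [hgldef, hs1def]; exact List.sum_ofFn
  have hglmem : ∀ x ∈ gl, 0 ≤ x := by
    intro x hx
    rw [hgldef, List.mem_ofFn] at hx
    obtain ⟨i, rfl⟩ := hx
    exact hγ i
  set g : Polynomial ℝ := Smigoc.gP Pr with hgdef
  set fR : Polynomial ℝ := (X - C lam1) * g with hfRdef
  have hdrop : ∀ k (hk : k < n), gl.drop k = γ ⟨k, hk⟩ :: gl.drop (k+1) := by
    intro k hk
    rw [hgldef, List.drop_eq_getElem_cons (by rw [List.length_ofFn]; omega)]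
    congr 1
    exact List.getElem_ofFn _
  have hdroplen : ∀ k, (gl.drop k).length = n - k := by
    intro k; rw [List.length_drop, hglen]
  have hdropmem : ∀ k, ∀ x ∈ gl.drop k, 0 ≤ x :=
    fun k x hx => hglmem x (List.drop_subset k gl hx)
  have hdropsum : ∀ k, (gl.drop k).sum ≤ s1 := by
    intro k
    have h := List.take_append_drop k gl
    have h1 : (gl.take k).sum + (gl.drop k).sum = s1 := by
      rw [← hglsum, ← List.sum_append, h]
    have h2 : 0 ≤ (gl.take k).sum :=
      List.sum_nonneg fun x hx => hglmem x (List.take_subset k gl hx)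
    linarith
  have hA := Smigoc.twoA_nonneg hGood
  have hbase : Smigoc.pchain fR (gl.drop 1) = X - C (γ ⟨0, by omega⟩) := by
    have h1 : (1:ℕ) < n := by omega
    rw [hdrop 1 h1, hfRdef, Smigoc.PL]
    have hT1 : Smigoc.pchain g (γ ⟨1, h1⟩ :: gl.drop 2) = 1 := by
      rw [← hdrop 1 h1]
      exact Smigoc.T1 Pr _ (by rw [hdroplen]; omega)
    have hT2 : Smigoc.pchain g (gl.drop 2) = X + C (Smigoc.twoA Pr + (gl.drop 2).sum) :=
      Smigoc.T2 Pr _ (by rw [hdroplen]; omega)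
    rw [hT1, mul_one]
    rw [show Smigoc.ev g (γ ⟨1, h1⟩ :: gl.drop 2)
        = (Smigoc.pchain g (gl.drop 2)).eval (γ ⟨1, h1⟩) from rfl, hT2]
    simp only [eval_add, eval_X, eval_C]
    have hsum0 : γ ⟨0, by omega⟩ + (gl.drop 1).sum = s1 := by
      have h0 := hdrop 0 (by omega)
      rw [List.drop_zero] at h0
      rw [← hglsum]
      conv_rhs => rw [h0]
      rw [List.sum_cons]
    have hsum1 : γ ⟨1, h1⟩ + (gl.drop 2).sum = (gl.drop 1).sum := by
      rw [hdrop 1 h1, List.sum_cons]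
    rw [show (γ ⟨1, h1⟩ + (Smigoc.twoA Pr + (gl.drop 2).sum)) = lam1 - γ ⟨0, by omega⟩ from by
      linarith [hsum0, hsum1, hsum2]]
    rw [map_sub]
    ring
  set bval : Fin n → ℝ := fun i => -((Smigoc.pchain fR (gl.drop ((i:ℕ)+1))).eval (γ i))
    with hbvaldef
  have hbval : ∀ i : Fin n, 0 ≤ bval i := by
    intro i
    have hcond : γ i + (gl.drop ((i:ℕ)+1)).sum + Smigoc.twoA Pr ≤ lam1 := by
      have h0 := hdrop (i:ℕ) i.2
      have h2 := hdropsum (i:ℕ)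
      rw [h0, List.sum_cons] at h2
      have h3 : γ (⟨(i:ℕ), i.2⟩ : Fin n) = γ i := by congr
      rw [h3] at h2
      linarith [hsum2]
    have hlen : (gl.drop ((i:ℕ)+1)).length ≤ 2 * Multiset.card Pr := by
      rw [hdroplen]; omega
    have := Smigoc.BETA hGood lam1 (gl.drop ((i:ℕ)+1)) (hdropmem _) (γ i) (hγ i) hcond hlen
    rw [hbvaldef]
    dsimp only
    rw [← hfRdef] at this
    linarith
  set Bm : Matrix (Fin n) (Fin n) ℝ := Matrix.of (fun i j =>
    if (i:ℕ) = (j:ℕ) then γ i else if (j:ℕ) = (i:ℕ)+1 then 1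
    else if (j:ℕ) = 0 ∧ (i:ℕ) ≠ 0 then bval i else 0) with hBmdef
  refine ⟨Bm, ?_, ?_, ?_⟩
  · intro i j
    rw [hBmdef, Matrix.of_apply]
    split_ifs
    · exact hγ i
    · norm_num
    · exact hbval i
    · exact le_refl 0
  · have hcp : Bm.charpoly = fR := by
      show (Matrix.charmatrix Bm).det = fR
      rw [hBmdef, Smigoc.charmatrix_B n γ bval]
      rw [show (fun i : Fin n => -C (bval i)) = (fun i : Fin n =>
          C ((Smigoc.pchain fR (gl.drop ((i:ℕ)+1))).eval (γ i))) from funext fun i => by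
        rw [hbvaldef]; dsimp only; rw [map_neg, neg_neg]]
      exact Smigoc.hess_det_eq_pchain n (by omega) γ fR hbase
    rw [hcp]
    have hQmap : ∀ z ∈ P, (Smigoc.Qp (-z.re) (Complex.normSq z)).map (algebraMap ℝ ℂ)
        = (X - C z) * (X - C ((starRingEnd ℂ) z)) := by
      intro z _
      have hconjz : (starRingEnd ℂ) z = ((2*z.re : ℝ) : ℂ) - z := by
        rw [← Complex.add_conj]; ring
      have hns : ((Complex.normSq z : ℝ) : ℂ) = z * (((2*z.re : ℝ) : ℂ) - z) := by
        rw [← hconjz, Complex.mul_conj]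
      rw [show Smigoc.Qp (-z.re) (Complex.normSq z)
          = X^2 + C (2*(-z.re)) * X + C (Complex.normSq z) from rfl]
      rw [Polynomial.map_add, Polynomial.map_add, Polynomial.map_mul, Polynomial.map_pow,
        Polynomial.map_X, Polynomial.map_C, Polynomial.map_C]
      rw [hconjz]
      rw [show (algebraMap ℝ ℂ) (2*(-z.re)) = -(((2*z.re : ℝ)):ℂ) from by
        rw [show (algebraMap ℝ ℂ) (2*(-z.re)) = (((2*(-z.re) : ℝ)):ℂ) from rfl]; push_cast; ring]
      rw [show (algebraMap ℝ ℂ) (Complex.normSq z) = z * (((2*z.re:ℝ):ℂ) - z) from by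
        rw [← hns]; rfl]
      simp only [_root_.map_sub, _root_.map_mul, _root_.map_neg, _root_.map_pow]
      ring
    have hgmap : g.map (algebraMap ℝ ℂ) = (M.map fun z => X - C z).prod := by
      rw [hgdef]
      show (Polynomial.mapRingHom (algebraMap ℝ ℂ)) (Smigoc.gP Pr) = _
      rw [show Smigoc.gP Pr = (Pr.map fun p => Smigoc.Qp p.1 p.2).prod from rfl]
      rw [map_multiset_prod, Multiset.map_map, hPrdef, Multiset.map_map]
      rw [hPeq, Multiset.map_bind, Multiset.prod_bind]
      refine congrArg Multiset.prod (Multiset.map_congr rfl fun z hz => ?_)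
      rw [show ((z ::ₘ (starRingEnd ℂ) z ::ₘ 0).map fun w => X - C w).prod
          = (X - C z) * (X - C ((starRingEnd ℂ) z)) from by simp]
      exact hQmap z hz
    rw [hfRdef, Polynomial.map_mul, Polynomial.map_sub, Polynomial.map_X, Polynomial.map_C,
      hgmap]
    rw [show (algebraMap ℝ ℂ) lam1 = lam i0 from by rw [hlam0]; rfl]
    rw [← Finset.mul_prod_erase Finset.univ _ (Finset.mem_univ i0)]
    congr 1
    rw [Finset.prod_eq_multiset_prod, hMdef, Multiset.map_map]
    rfl
  · refine Multiset.map_congr rfl fun i _ => ?_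
    rw [hBmdef, Matrix.of_apply, if_pos rfl]
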